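/- Let p > K ≥ 1, let B be a real p×K matrix of full column rank K, and let Ψ be a p×p symmetric positive definite matrix. Set Σ = BBᵀ + Ψ, D = diag(Σ), and R = D^{−1/2} Σ D^{−1/2}. If ‖D^{−1}Ψ‖ ≤ 1, then the number of eigenvalues of R that are strictly greater than 1 is at most K, i.e. #{ j ∈ {1,…,p} : λ_j(R) > 1 } ≤ K. -/

import Mathlib

open MeasureTheory Filter Matrix
open scoped BigOperators Topology

/-- The eigenvalues of a (Hermitian) real matrix, sorted in decreasing order. -/
noncomputable def eigDesc {p : ℕ} (A : Matrix (Fin p) (Fin p) ℝ) : Fin p → ℝ :=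
  if hA : A.IsHermitian then fun j => hA.eigenvalues (Tuple.sort hA.eigenvalues j.rev) else 0

/-- The operator (spectral) norm of a real matrix. -/
noncomputable def specNorm {m n : ℕ} (M : Matrix (Fin m) (Fin n) ℝ) : ℝ :=
  Real.sqrt (⨆ j : Fin m, eigDesc (M * Mᵀ) j)

/-- The correlation matrix `R = D^{-1/2} Σ D^{-1/2}` with `Σ = BBᵀ + Ψ`, `D = diag(Σ)`. -/
noncomputable def corrOf {p K : ℕ} (B : Matrix (Fin p) (Fin K) ℝ)
    (Ψ : Matrix (Fin p) (Fin p) ℝ) : Matrix (Fin p) (Fin p) ℝ :=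
  (Matrix.diagonal fun i => (Real.sqrt ((B * Bᵀ + Ψ) i i))⁻¹) * (B * Bᵀ + Ψ) *
    (Matrix.diagonal fun i => (Real.sqrt ((B * Bᵀ + Ψ) i i))⁻¹)

lemma coords_dot {p : ℕ} {N : Matrix (Fin p) (Fin p) ℝ} (hN : N.IsHermitian) (c : Fin p → ℝ) :
    ((hN.eigenvectorUnitary : Matrix (Fin p) (Fin p) ℝ) *ᵥ c) ⬝ᵥ
      ((hN.eigenvectorUnitary : Matrix (Fin p) (Fin p) ℝ) *ᵥ c) = ∑ i, c i ^ 2 := by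
  set U : Matrix (Fin p) (Fin p) ℝ := (hN.eigenvectorUnitary : Matrix (Fin p) (Fin p) ℝ)
  have h1 : star U * U = 1 := Unitary.coe_star_mul_self hN.eigenvectorUnitary
  have hstar : star U = Uᵀ := by
    rw [Matrix.star_eq_conjTranspose, Matrix.conjTranspose_eq_transpose_of_trivial]
  calc (U *ᵥ c) ⬝ᵥ (U *ᵥ c) = c ᵥ* Uᵀ ⬝ᵥ (U *ᵥ c) := by rw [← mulVec_transpose, transpose_transpose]
    _ = c ⬝ᵥ (Uᵀ *ᵥ (U *ᵥ c)) := by rw [dotProduct_mulVec, vecMul_vecMul, ← dotProduct_mulVec,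
          ← mulVec_mulVec]
    _ = ∑ i, c i ^ 2 := by
        rw [mulVec_mulVec, ← hstar, h1, one_mulVec]
        simp [dotProduct, sq]

lemma coords_quad {p : ℕ} {N : Matrix (Fin p) (Fin p) ℝ} (hN : N.IsHermitian) (c : Fin p → ℝ) :
    ((hN.eigenvectorUnitary : Matrix (Fin p) (Fin p) ℝ) *ᵥ c) ⬝ᵥ
      (N *ᵥ ((hN.eigenvectorUnitary : Matrix (Fin p) (Fin p) ℝ) *ᵥ c))
      = ∑ i, hN.eigenvalues i * c i ^ 2 := by
  set U : Matrix (Fin p) (Fin p) ℝ := (hN.eigenvectorUnitary : Matrix (Fin p) (Fin p) ℝ)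
  have hstar : star U = Uᵀ := by
    rw [Matrix.star_eq_conjTranspose, Matrix.conjTranspose_eq_transpose_of_trivial]
  have key : Uᵀ * N * U = diagonal hN.eigenvalues := by
    have := hN.conjStarAlgAut_star_eigenvectorUnitary
    rw [Unitary.conjStarAlgAut_star_apply] at this
    rw [hstar] at this
    simpa using this
  calc (U *ᵥ c) ⬝ᵥ (N *ᵥ (U *ᵥ c)) = c ᵥ* Uᵀ ⬝ᵥ (N *ᵥ (U *ᵥ c)) := by
        rw [← mulVec_transpose, transpose_transpose]
    _ = c ⬝ᵥ ((Uᵀ * N * U) *ᵥ c) := by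
        rw [dotProduct_mulVec, vecMul_vecMul, ← dotProduct_mulVec, mulVec_mulVec]
    _ = ∑ i, hN.eigenvalues i * c i ^ 2 := by
        rw [key]
        simp [dotProduct, mulVec_diagonal, sq]
        exact Finset.sum_congr rfl fun i _ => by ring

lemma quad_le_max {p : ℕ} {N : Matrix (Fin p) (Fin p) ℝ} (hN : N.IsHermitian) {c0 : ℝ}
    (hc : ∀ i, hN.eigenvalues i ≤ c0) (v : Fin p → ℝ) :
    v ⬝ᵥ (N *ᵥ v) ≤ c0 * (v ⬝ᵥ v) := by
  set U : Matrix (Fin p) (Fin p) ℝ := (hN.eigenvectorUnitary : Matrix (Fin p) (Fin p) ℝ)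
  have h2 : U * star U = 1 := Unitary.coe_mul_star_self hN.eigenvectorUnitary
  set c : Fin p → ℝ := star U *ᵥ v with hc'
  have hv : U *ᵥ c = v := by
    rw [hc', mulVec_mulVec, h2, one_mulVec]
  calc v ⬝ᵥ (N *ᵥ v) = ∑ i, hN.eigenvalues i * c i ^ 2 := by rw [← hv]; exact coords_quad hN c
    _ ≤ ∑ i, c0 * c i ^ 2 := Finset.sum_le_sum fun i _ =>
        mul_le_mul_of_nonneg_right (hc i) (sq_nonneg _)
    _ = c0 * (v ⬝ᵥ v) := by rw [← hv, coords_dot hN c, Finset.mul_sum]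

/-- under the factor-model covariance structure with `‖D⁻¹Ψ‖ ≤ 1`,
the number of eigenvalues of the correlation matrix `R` strictly exceeding `1`
is at most `K`. -/
theorem number_of_eigenvalues_gt_one_le_K {p K : ℕ} (hK : 1 ≤ K) (hKp : K < p)
    (B : Matrix (Fin p) (Fin K) ℝ) (hB : B.rank = K)
    (Ψ : Matrix (Fin p) (Fin p) ℝ) (hΨ : Ψ.PosDef)
    (hnorm : specNorm ((Matrix.diagonal fun i => ((B * Bᵀ + Ψ) i i)⁻¹) * Ψ) ≤ 1) :
    Set.ncard {j : Fin p | 1 < eigDesc (corrOf B Ψ) j} ≤ K := by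

  have hp : 0 < p := lt_of_le_of_lt (Nat.zero_le K) hKp
  haveI : Nonempty (Fin p) := ⟨⟨0, hp⟩⟩
  set Sg : Matrix (Fin p) (Fin p) ℝ := B * Bᵀ + Ψ with hSg
  have hBBt : (B * Bᵀ).PosSemidef := by
    have := Matrix.posSemidef_self_mul_conjTranspose B
    rwa [Matrix.conjTranspose_eq_transpose_of_trivial] at this
  have hSgpd : Sg.PosDef := Matrix.PosDef.posSemidef_add hBBt hΨ
  have hdiagpos : ∀ i, 0 < Sg i i := by
    intro i
    exact hSgpd.diag_pos
  set d : Fin p → ℝ := fun i => Real.sqrt (Sg i i) with hd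
  have hdpos : ∀ i, 0 < d i := fun i => Real.sqrt_pos.mpr (hdiagpos i)
  have hdsq : ∀ i, d i * d i = Sg i i := fun i => Real.mul_self_sqrt (hdiagpos i).le
  set Dih : Matrix (Fin p) (Fin p) ℝ := Matrix.diagonal (fun i => (d i)⁻¹) with hDih
  have hDihHerm : Dih.IsHermitian := Matrix.isHermitian_diagonal _
  have hSgHerm : Sg.IsHermitian := hSgpd.1
  have hcorr : corrOf B Ψ = Dih * Sg * Dih := rfl
  have hA : (corrOf B Ψ).IsHermitian := by
    rw [hcorr]
    unfold Matrix.IsHermitian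
    rw [Matrix.conjTranspose_mul, Matrix.conjTranspose_mul, hDihHerm.eq, hSgHerm.eq, mul_assoc]
  -- the matrix in the norm hypothesis
  set M : Matrix (Fin p) (Fin p) ℝ := (Matrix.diagonal fun i => (Sg i i)⁻¹) * Ψ with hM
  have hΨt : Ψᵀ = Ψ := by
    have := hΨ.1.eq
    rwa [Matrix.conjTranspose_eq_transpose_of_trivial] at this
  set S : Matrix (Fin p) (Fin p) ℝ := Dih * Ψ * Dih with hS'
  have hSherm : S.IsHermitian := by
    unfold Matrix.IsHermitian
    rw [hS', Matrix.conjTranspose_mul, Matrix.conjTranspose_mul, hDihHerm.eq, hΨ.1.eq, mul_assoc]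
  -- eigenvalues of M * Mᵀ are bounded by 1
  have hN : (M * Mᵀ).IsHermitian := by
    have := Matrix.isHermitian_mul_conjTranspose_self M
    rwa [Matrix.conjTranspose_eq_transpose_of_trivial] at this
  have hc0 : (⨆ j : Fin p, eigDesc (M * Mᵀ) j) ≤ 1 := by
    by_contra hlt
    push_neg at hlt
    have h1 : (1:ℝ) < Real.sqrt (⨆ j : Fin p, eigDesc (M * Mᵀ) j) := by
      rw [show (1:ℝ) = Real.sqrt 1 by simp]
      exact Real.sqrt_lt_sqrt (by norm_num) hlt
    have : specNorm M = Real.sqrt (⨆ j : Fin p, eigDesc (M * Mᵀ) j) := rfl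
    rw [hM] at this
    linarith [hnorm, this ▸ h1]
  have heigN : ∀ i, hN.eigenvalues i ≤ 1 := by
    intro i
    have heq : eigDesc (M * Mᵀ) = fun j => hN.eigenvalues (Tuple.sort hN.eigenvalues j.rev) :=
      dif_pos hN
    have hle : hN.eigenvalues i ≤ ⨆ j : Fin p, eigDesc (M * Mᵀ) j := by
      have hj : eigDesc (M * Mᵀ) (((Tuple.sort hN.eigenvalues).symm i).rev) = hN.eigenvalues i := by
        rw [heq]
        simp
      rw [← hj]
      exact le_ciSup (Set.Finite.bddAbove (Set.finite_range _)) _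
    linarith
  -- eigenvalues of S are ≤ 1
  have hSle : ∀ i, hSherm.eigenvalues i ≤ 1 := by
    intro i
    set μ : ℝ := hSherm.eigenvalues i with hμ
    set u : Fin p → ℝ := ⇑(hSherm.eigenvectorBasis i) with hu'
    have hu : S *ᵥ u = μ • u := hSherm.mulVec_eigenvectorBasis i
    have hune : u ≠ 0 := by
      intro h0
      exact hSherm.eigenvectorBasis.orthonormal.ne_zero i (by ext j; exact congrFun h0 j)
    set y : Fin p → ℝ := fun j => d j * u j with hy
    have hyne : y ≠ 0 := by
      intro h0
      apply hune
      funext j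
      have := congrFun h0 j
      simp only [hy] at this
      have := (mul_eq_zero.mp this).resolve_left (ne_of_gt (hdpos j))
      simpa using this
    -- Mᵀ *ᵥ y = μ • y
    have hDiu : (Matrix.diagonal fun i => (Sg i i)⁻¹) *ᵥ y = Dih *ᵥ u := by
      funext j
      simp only [Matrix.mulVec_diagonal, hy, hDih]
      have hne : d j ≠ 0 := (hdpos j).ne'
      rw [← hdsq j]
      field_simp
    have hSu' : Dih *ᵥ (Ψ *ᵥ (Dih *ᵥ u)) = μ • u := by
      rw [Matrix.mulVec_mulVec, Matrix.mulVec_mulVec]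
      exact hu
    have hPsiDiu : Ψ *ᵥ (Dih *ᵥ u) = μ • y := by
      funext j
      have hj := congrFun hSu' j
      simp only [Matrix.mulVec_mulVec] at hj ⊢
      have hj' : ((Dih * (Ψ * Dih)) *ᵥ u) j = (d j)⁻¹ * (((Ψ * Dih) *ᵥ u) j) := by
        rw [← Matrix.mulVec_mulVec]
        simp [hDih, Matrix.mulVec_diagonal]
      rw [hj'] at hj
      have hne : d j ≠ 0 := (hdpos j).ne'
      have hmu : (μ • u) j = μ * u j := rfl
      rw [hmu] at hj
      calc ((Ψ * Dih) *ᵥ u) j = d j * ((d j)⁻¹ * ((Ψ * Dih) *ᵥ u) j) := by field_simp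
        _ = d j * (μ * u j) := by rw [hj]
        _ = (μ • y) j := by simp only [Pi.smul_apply, smul_eq_mul, hy]; ring
    have hMty : Mᵀ *ᵥ y = μ • y := by
      rw [hM, Matrix.transpose_mul, hΨt, Matrix.diagonal_transpose, ← Matrix.mulVec_mulVec,
        hDiu, hPsiDiu]
    -- quadratic form of M * Mᵀ at y
    have hquad : y ⬝ᵥ ((M * Mᵀ) *ᵥ y) = μ^2 * (y ⬝ᵥ y) := by
      rw [← Matrix.mulVec_mulVec, Matrix.dotProduct_mulVec, ← Matrix.mulVec_transpose, hMty]
      rw [smul_dotProduct, dotProduct_smul, smul_eq_mul, smul_eq_mul]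
      ring
    have hypos : 0 < y ⬝ᵥ y := by
      have h0 : 0 ≤ y ⬝ᵥ y := Finset.sum_nonneg fun i _ => mul_self_nonneg _
      rcases h0.lt_or_eq with h | h
      · exact h
      · exact absurd (dotProduct_self_eq_zero.mp h.symm) hyne
    have hb := quad_le_max hN heigN y
    rw [hquad] at hb
    have hμ2 : μ^2 ≤ 1 := by
      have := (mul_le_mul_iff_of_pos_right hypos).mp (by linarith : μ^2 * (y ⬝ᵥ y) ≤ 1 * (y ⬝ᵥ y))
      linarith
    calc μ ≤ |μ| := le_abs_self μ
      _ ≤ 1 := (sq_le_one_iff_abs_le_one μ).mp hμ2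
  -- Counting part
  classical
  set lam : Fin p → ℝ := hA.eigenvalues with hlam
  set e : Equiv.Perm (Fin p) := (Fin.revPerm).trans (Tuple.sort lam) with he
  have hset : {j : Fin p | 1 < eigDesc (corrOf B Ψ) j} = e ⁻¹' {i | 1 < lam i} := by
    ext j
    simp only [Set.mem_setOf_eq, Set.mem_preimage, eigDesc, dif_pos hA, he, Equiv.trans_apply,
      Fin.revPerm_apply]
    exact Iff.rfl
  rw [hset]
  have himg : e ⁻¹' {i | 1 < lam i} = e.symm '' {i | 1 < lam i} := by
    rw [Equiv.image_eq_preimage_symm, Equiv.symm_symm]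
  rw [himg, Set.ncard_image_of_injective _ e.symm.injective]
  set T : Finset (Fin p) := Finset.univ.filter (fun i => 1 < lam i) with hT
  have hcoe : {i : Fin p | 1 < lam i} = ↑T := by ext i; simp [hT]
  rw [hcoe, Set.ncard_coe_finset]
  set U : Matrix (Fin p) (Fin p) ℝ := (hA.eigenvectorUnitary : Matrix (Fin p) (Fin p) ℝ) with hU
  set X : Matrix (Fin K) (Fin p) ℝ := Bᵀ * Dih * U with hX
  set W : Matrix (Fin K) {x // x ∈ T} ℝ := X.submatrix id (fun t => (t : Fin p)) with hW
  have hinj : Function.Injective W.mulVecLin := by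
    apply (injective_iff_map_eq_zero _).mpr
    intro c hc
    have hc' : W *ᵥ c = 0 := hc
    set ct : Fin p → ℝ := fun i => if h : i ∈ T then c ⟨i, h⟩ else 0 with hct
    have hXct : X *ᵥ ct = 0 := by
      have h1 : X *ᵥ ct = W *ᵥ c := by
        funext k
        simp only [Matrix.mulVec, dotProduct, hW, Matrix.submatrix_apply, id]
        rw [← Finset.sum_subset (Finset.subset_univ T)
          (fun i _ hiT => by simp [hct, dif_neg hiT])]
        rw [Finset.sum_subtype T (fun i => Iff.rfl) (fun i => X k i * ct i)]
        exact Finset.sum_congr rfl (fun t _ => by rw [hct]; simp [dif_pos t.2])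
      rw [h1]
      exact hc'
    set v : Fin p → ℝ := U *ᵥ ct with hv
    have hAv : v ⬝ᵥ ((corrOf B Ψ) *ᵥ v) = ∑ i, lam i * ct i ^ 2 := coords_quad hA ct
    have hvv : v ⬝ᵥ v = ∑ i, ct i ^ 2 := coords_dot hA ct
    have hYv : (Bᵀ * Dih) *ᵥ v = 0 := by
      rw [hv, Matrix.mulVec_mulVec]
      exact hXct
    have hQv : v ⬝ᵥ ((Dih * (B * Bᵀ) * Dih) *ᵥ v) = 0 := by
      have hfac : Dih * (B * Bᵀ) * Dih = (Bᵀ * Dih)ᵀ * (Bᵀ * Dih) := by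
        rw [Matrix.transpose_mul, Matrix.transpose_transpose]
        rw [show Dihᵀ = Dih from by rw [hDih, Matrix.diagonal_transpose]]
        rw [Matrix.mul_assoc, Matrix.mul_assoc, Matrix.mul_assoc]
      rw [hfac, ← Matrix.mulVec_mulVec, Matrix.dotProduct_mulVec, Matrix.vecMul_transpose, hYv]
      simp
    have hsplit : corrOf B Ψ = (Dih * (B * Bᵀ) * Dih) + (Dih * Ψ * Dih) := by
      rw [hcorr, hSg, Matrix.mul_add, Matrix.add_mul]
    have hSv : v ⬝ᵥ ((Dih * Ψ * Dih) *ᵥ v) ≤ 1 * (v ⬝ᵥ v) := quad_le_max hSherm hSle v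
    have hdecomp : v ⬝ᵥ ((corrOf B Ψ) *ᵥ v)
        = v ⬝ᵥ ((Dih * (B * Bᵀ) * Dih) *ᵥ v) + v ⬝ᵥ ((Dih * Ψ * Dih) *ᵥ v) := by
      rw [hsplit, Matrix.add_mulVec, dotProduct_add]
    have hmain : ∑ i, lam i * ct i ^ 2 ≤ ∑ i, ct i ^ 2 := by
      have h2 := hSv
      rw [one_mul, hvv] at h2
      calc ∑ i, lam i * ct i ^ 2 = v ⬝ᵥ ((corrOf B Ψ) *ᵥ v) := hAv.symm
        _ = 0 + v ⬝ᵥ ((Dih * Ψ * Dih) *ᵥ v) := by rw [hdecomp, hQv]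
        _ ≤ ∑ i, ct i ^ 2 := by rw [zero_add]; exact h2
    have hdiff : ∑ i, (lam i - 1) * ct i ^ 2
        = (∑ i, lam i * ct i ^ 2) - ∑ i, ct i ^ 2 := by
      rw [← Finset.sum_sub_distrib]
      exact Finset.sum_congr rfl fun i _ => by ring
    have hterm : ∀ i ∈ Finset.univ, (0:ℝ) ≤ (lam i - 1) * ct i ^ 2 := by
      intro i _
      by_cases h : i ∈ T
      · have h1 : 1 < lam i := (Finset.mem_filter.mp h).2
        exact mul_nonneg (by linarith) (sq_nonneg _)
      · simp [hct, dif_neg h]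
    have hsum0 : ∑ i, (lam i - 1) * ct i ^ 2 = 0 :=
      le_antisymm (by rw [hdiff]; linarith) (Finset.sum_nonneg hterm)
    funext t
    have h0 := (Finset.sum_eq_zero_iff_of_nonneg hterm).mp hsum0 t.val (Finset.mem_univ _)
    have hl : 1 < lam t.val := (Finset.mem_filter.mp t.2).2
    have hct0 : ct t.val = 0 := by
      rcases mul_eq_zero.mp h0 with h | h
      · linarith
      · exact pow_eq_zero_iff (by norm_num) |>.mp h
    rw [hct] at hct0
    simp only [dif_pos t.2] at hct0
    exact hct0
  have h1 : T.card = Module.finrank ℝ ({x // x ∈ T} → ℝ) := by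
    rw [Module.finrank_pi]
    simp [Fintype.card_coe]
  have h2 : Module.finrank ℝ (Fin K → ℝ) = K := by
    rw [Module.finrank_pi]
    simp
  rw [h1, ← h2]
  exact LinearMap.finrank_le_finrank_of_injective hinj
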